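/- arXiv:2311.05136 — 2 statements merged into one kernel-verified Lean document; each statement's English description precedes it below -/
import Mathlib

section
/- Let ξ, φ₁, …, φ_R be vectors in a complex inner product space. Then ∑_{r=1}^R |⟨ξ, φ_r⟩| ≤ ‖ξ‖ · (∑_{r=1}^R ∑_{s=1}^R |⟨φ_r, φ_s⟩|)^{1/2}. -/
open scoped InnerProductSpace in
theorem halasz_montgomery_first {E : Type*} [NormedAddCommGroup E] [InnerProductSpace ℂ E]
    (R : ℕ) (ξ : E) (φ : Fin R → E) :
    ∑ r : Fin R, ‖⟪ξ, φ r⟫_ℂ‖ ≤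
      ‖ξ‖ * Real.sqrt (∑ r : Fin R, ∑ s : Fin R, ‖⟪φ r, φ s⟫_ℂ‖) := by
  classical
  set c : Fin R → ℂ := fun r =>
    if ⟪ξ, φ r⟫_ℂ = 0 then 1 else (‖⟪ξ, φ r⟫_ℂ‖ : ℂ) / ⟪ξ, φ r⟫_ℂ with hc
  have hcnorm : ∀ r, ‖c r‖ = 1 := by
    intro r; by_cases h : ⟪ξ, φ r⟫_ℂ = 0 <;>
      simp [hc, h, norm_div, Complex.norm_real]
  have hmul : ∀ r, c r * ⟪ξ, φ r⟫_ℂ = (‖⟪ξ, φ r⟫_ℂ‖ : ℂ) := by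
    intro r; by_cases h : ⟪ξ, φ r⟫_ℂ = 0
    · simp [hc, h]
    · simp only [hc, if_neg h]; field_simp
  set ψ := ∑ r, c r • φ r with hψ
  have h1 : ((∑ r : Fin R, ‖⟪ξ, φ r⟫_ℂ‖ : ℝ) : ℂ) = ⟪ξ, ψ⟫_ℂ := by
    simp [hψ, inner_sum, inner_smul_right, hmul]
  have h2 : ∑ r : Fin R, ‖⟪ξ, φ r⟫_ℂ‖ ≤ ‖ξ‖ * ‖ψ‖ := by
    calc ∑ r : Fin R, ‖⟪ξ, φ r⟫_ℂ‖
        = ‖((∑ r : Fin R, ‖⟪ξ, φ r⟫_ℂ‖ : ℝ) : ℂ)‖ := by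
          rw [Complex.norm_real]
          exact (Real.norm_of_nonneg
            (Finset.sum_nonneg fun _ _ => norm_nonneg _)).symm
      _ = ‖⟪ξ, ψ⟫_ℂ‖ := by rw [h1]
      _ ≤ ‖ξ‖ * ‖ψ‖ := norm_inner_le_norm ξ ψ
  have h3 : ‖ψ‖ ≤ Real.sqrt (∑ r : Fin R, ∑ s : Fin R, ‖⟪φ r, φ s⟫_ℂ‖) := by
    rw [show (‖ψ‖ : ℝ) = Real.sqrt (‖ψ‖ ^ 2) by
      rw [Real.sqrt_sq (norm_nonneg _)]]
    apply Real.sqrt_le_sqrt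
    have : (‖ψ‖ : ℝ) ^ 2 = RCLike.re ⟪ψ, ψ⟫_ℂ := by
      rw [← inner_self_eq_norm_sq (𝕜 := ℂ) ψ]
    rw [this]
    calc RCLike.re ⟪ψ, ψ⟫_ℂ ≤ ‖⟪ψ, ψ⟫_ℂ‖ := RCLike.re_le_norm _
      _ ≤ ∑ r : Fin R, ∑ s : Fin R, ‖⟪φ r, φ s⟫_ℂ‖ := by
          rw [hψ, sum_inner]
          refine le_trans (norm_sum_le _ _) (Finset.sum_le_sum fun r _ => ?_)
          rw [inner_sum]
          refine le_trans (norm_sum_le _ _) (Finset.sum_le_sum fun s _ => ?_)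
          rw [inner_smul_left, inner_smul_right, norm_mul, norm_mul,
            RCLike.norm_conj, hcnorm, hcnorm, one_mul, one_mul]
  calc ∑ r : Fin R, ‖⟪ξ, φ r⟫_ℂ‖ ≤ ‖ξ‖ * ‖ψ‖ := h2
    _ ≤ ‖ξ‖ * Real.sqrt (∑ r : Fin R, ∑ s : Fin R, ‖⟪φ r, φ s⟫_ℂ‖) :=
        mul_le_mul_of_nonneg_left h3 (norm_nonneg _)
end

section
/- Let ξ, φ₁, …, φ_R be vectors in a complex inner product space. Then ∑_{r=1}^R |⟨ξ, φ_r⟩|² ≤ ‖ξ‖² · max_{1 ≤ r ≤ R} ∑_{s=1}^R |⟨φ_r, φ_s⟩|. -/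
open scoped InnerProductSpace in
theorem halasz_montgomery_second {E : Type*} [NormedAddCommGroup E] [InnerProductSpace ℂ E]
    (R : ℕ) (hR : (Finset.univ : Finset (Fin R)).Nonempty) (ξ : E) (φ : Fin R → E) :
    ∑ r : Fin R, ‖⟪ξ, φ r⟫_ℂ‖ ^ 2 ≤
      ‖ξ‖ ^ 2 * Finset.univ.sup' hR (fun r => ∑ s : Fin R, ‖⟪φ r, φ s⟫_ℂ‖) := by
  set a : Fin R → ℂ := fun r => ⟪ξ, φ r⟫_ℂ with ha
  set S : ℝ := ∑ r : Fin R, ‖a r‖ ^ 2 with hS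
  set M : ℝ := Finset.univ.sup' hR (fun r => ∑ s : Fin R, ‖⟪φ r, φ s⟫_ℂ‖) with hM
  show S ≤ ‖ξ‖ ^ 2 * M
  have hS0 : 0 ≤ S := Finset.sum_nonneg fun _ _ => sq_nonneg _
  have hM0 : 0 ≤ M := by
    obtain ⟨r₀, -⟩ := id hR
    exact le_trans (Finset.sum_nonneg fun s _ => norm_nonneg (⟪φ r₀, φ s⟫_ℂ))
      (Finset.le_sup' (fun r => ∑ s : Fin R, ‖⟪φ r, φ s⟫_ℂ‖) (Finset.mem_univ r₀))
  set v : E := ∑ r : Fin R, (starRingEnd ℂ) (a r) • φ r with hv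
  have hinner : ⟪ξ, v⟫_ℂ = (S : ℂ) := by
    rw [hv, inner_sum]
    simp only [inner_smul_right]
    rw [hS]
    push_cast
    refine Finset.sum_congr rfl fun r _ => ?_
    rw [RCLike.conj_mul (a r)]
    norm_cast
  have hCS : S ≤ ‖ξ‖ * ‖v‖ := by
    have h := norm_inner_le_norm (𝕜 := ℂ) ξ v
    rwa [hinner, Complex.norm_real, Real.norm_of_nonneg hS0] at h
  have hsym : ∀ r s : Fin R, ‖⟪φ r, φ s⟫_ℂ‖ = ‖⟪φ s, φ r⟫_ℂ‖ := fun r s => by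
    rw [← inner_conj_symm (φ s) (φ r), RCLike.norm_conj]
  have hvv : ‖v‖ ^ 2 ≤ ∑ r : Fin R, ∑ s : Fin R, ‖a r‖ * ‖a s‖ * ‖⟪φ r, φ s⟫_ℂ‖ := by
    have h1 : (⟪v, v⟫_ℂ) = ∑ r : Fin R, ∑ s : Fin R,
        a r * ((starRingEnd ℂ) (a s) * ⟪φ r, φ s⟫_ℂ) := by
      rw [hv, sum_inner]
      refine Finset.sum_congr rfl fun r _ => ?_
      rw [inner_smul_left, inner_sum]
      simp only [inner_smul_right, Finset.mul_sum, RingHomCompTriple.comp_apply,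
        RingHom.id_apply, starRingEnd_self_apply]
    have h2 : ‖v‖ ^ 2 = ‖(⟪v, v⟫_ℂ)‖ := by
      rw [inner_self_eq_norm_sq_to_K (𝕜 := ℂ)]
      rw [norm_pow, RCLike.norm_ofReal, abs_of_nonneg (norm_nonneg v)]
    rw [h2, h1]
    calc ‖∑ r : Fin R, ∑ s : Fin R, a r * ((starRingEnd ℂ) (a s) * ⟪φ r, φ s⟫_ℂ)‖
        ≤ ∑ r : Fin R, ‖∑ s : Fin R, a r * ((starRingEnd ℂ) (a s) * ⟪φ r, φ s⟫_ℂ)‖ :=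
          norm_sum_le _ _
      _ ≤ ∑ r : Fin R, ∑ s : Fin R, ‖a r * ((starRingEnd ℂ) (a s) * ⟪φ r, φ s⟫_ℂ)‖ :=
          Finset.sum_le_sum fun r _ => norm_sum_le _ _
      _ = ∑ r : Fin R, ∑ s : Fin R, ‖a r‖ * ‖a s‖ * ‖⟪φ r, φ s⟫_ℂ‖ := by
          refine Finset.sum_congr rfl fun r _ => Finset.sum_congr rfl fun s _ => ?_
          rw [norm_mul, norm_mul, RCLike.norm_conj, mul_assoc]
  have hdouble : ∑ r : Fin R, ∑ s : Fin R, ‖a r‖ * ‖a s‖ * ‖⟪φ r, φ s⟫_ℂ‖ ≤ S * M := by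
    have step1 : ∑ r : Fin R, ∑ s : Fin R, ‖a r‖ * ‖a s‖ * ‖⟪φ r, φ s⟫_ℂ‖
        ≤ ∑ r : Fin R, ∑ s : Fin R, (‖a r‖ ^ 2 * ‖⟪φ r, φ s⟫_ℂ‖ +
            ‖a s‖ ^ 2 * ‖⟪φ s, φ r⟫_ℂ‖) / 2 := by
      refine Finset.sum_le_sum fun r _ => Finset.sum_le_sum fun s _ => ?_
      rw [← hsym r s]
      nlinarith [sq_nonneg (‖a r‖ - ‖a s‖), norm_nonneg (⟪φ r, φ s⟫_ℂ),
        mul_nonneg (mul_nonneg (norm_nonneg (a r)) (norm_nonneg (a s)))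
          (norm_nonneg (⟪φ r, φ s⟫_ℂ))]
    have step2 : ∑ r : Fin R, ∑ s : Fin R, (‖a r‖ ^ 2 * ‖⟪φ r, φ s⟫_ℂ‖ +
            ‖a s‖ ^ 2 * ‖⟪φ s, φ r⟫_ℂ‖) / 2
        = ∑ r : Fin R, ∑ s : Fin R, ‖a r‖ ^ 2 * ‖⟪φ r, φ s⟫_ℂ‖ := by
      simp only [add_div, Finset.sum_add_distrib]
      rw [Finset.sum_comm (f := fun r s => ‖a s‖ ^ 2 * ‖⟪φ s, φ r⟫_ℂ‖ / 2)]
      rw [← Finset.sum_add_distrib]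
      refine Finset.sum_congr rfl fun r _ => ?_
      rw [← Finset.sum_add_distrib]
      refine Finset.sum_congr rfl fun s _ => ?_
      ring
    have step3 : ∑ r : Fin R, ∑ s : Fin R, ‖a r‖ ^ 2 * ‖⟪φ r, φ s⟫_ℂ‖ ≤ S * M := by
      rw [hS, Finset.sum_mul]
      refine Finset.sum_le_sum fun r _ => ?_
      rw [← Finset.mul_sum]
      exact mul_le_mul_of_nonneg_left
        (Finset.le_sup' (fun r => ∑ s : Fin R, ‖⟪φ r, φ s⟫_ℂ‖) (Finset.mem_univ r)) (sq_nonneg _)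
    linarith
  have hfinal : S ^ 2 ≤ ‖ξ‖ ^ 2 * (S * M) := by
    calc S ^ 2 ≤ (‖ξ‖ * ‖v‖) ^ 2 := by nlinarith [norm_nonneg ξ, norm_nonneg v]
      _ = ‖ξ‖ ^ 2 * ‖v‖ ^ 2 := by ring
      _ ≤ ‖ξ‖ ^ 2 * (S * M) := by
          exact mul_le_mul_of_nonneg_left (le_trans hvv hdouble) (sq_nonneg _)
  rcases eq_or_lt_of_le hS0 with h | h
  · rw [← h]; positivity
  · nlinarith
end
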